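/- Let γ ≥ 1 with γ ∉ ℕ and C ∈ ℝ \ {0}. With m₊(z,γ) = -C²(2/π) sin(πγ) e^{-iπγ} z^γ (branch cut on [0,∞)), for all 0 ≤ λ₁ < λ₂ one has lim_{δ↓0} lim_{ε↓0} (1/π) ∫_{λ₁+δ}^{λ₂+δ} Im(m₊(λ + iε, γ)) dλ = C² · (λ₂^{γ+1} - λ₁^{γ+1})/(γ+1) · (2/π²) sin²(πγ). -/

import Mathlib

open Filter

/-- The argument of `z` taken in `(0, 2π)` (branch cut along `[0,∞)`). -/
noncomputable def argCut (z : ℂ) : ℝ :=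
  if 0 < Complex.arg z then Complex.arg z else Complex.arg z + 2 * Real.pi

/-- `z^γ = |z|^γ e^{iγ arg z}` with `arg z ∈ (0,2π)` (branch cut along `[0,∞)`). -/
noncomputable def cpowCut (γ : ℝ) (z : ℂ) : ℂ :=
  ((‖z‖ ^ γ : ℝ) : ℂ) * Complex.exp (Complex.I * ((γ * argCut z : ℝ) : ℂ))

/-- The Weyl–Titchmarsh coefficient `m₊(z,γ) = -C²(2/π) sin(πγ) e^{-iπγ} z^γ`. -/
noncomputable def mPlusSing (C γ : ℝ) (z : ℂ) : ℂ :=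
  ((-(C ^ 2) * (2 / Real.pi) * Real.sin (Real.pi * γ) : ℝ) : ℂ) *
    Complex.exp (-Complex.I * ((Real.pi * γ : ℝ) : ℂ)) * cpowCut γ z

lemma arg_pos_of_im_pos {z : ℂ} (hz : 0 < z.im) : 0 < Complex.arg z :=
  lt_of_le_of_ne (Complex.arg_nonneg_iff.2 hz.le)
    (fun h => hz.ne' (Complex.arg_eq_zero_iff.1 h.symm).2)

/-- Explicit formula for the imaginary part of `m₊` in the upper half plane. -/
lemma im_mPlusSing (C γ : ℝ) {z : ℂ} (hz : 0 < z.im) :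
    (mPlusSing C γ z).im =
      (-(C ^ 2) * (2 / Real.pi) * Real.sin (Real.pi * γ)) * ‖z‖ ^ γ *
        Real.sin (γ * Complex.arg z - Real.pi * γ) := by
  have harg : argCut z = Complex.arg z := if_pos (arg_pos_of_im_pos hz)
  set A := -(C ^ 2) * (2 / Real.pi) * Real.sin (Real.pi * γ) with hA
  have key : mPlusSing C γ z
      = ((A : ℝ) : ℂ) * ((‖z‖ ^ γ : ℝ) : ℂ) *
        Complex.exp (((γ * Complex.arg z - Real.pi * γ : ℝ) : ℂ) * Complex.I) := by
    have e1 : Complex.exp (-Complex.I * ((Real.pi * γ : ℝ) : ℂ)) *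
        Complex.exp (Complex.I * ((γ * Complex.arg z : ℝ) : ℂ))
        = Complex.exp (((γ * Complex.arg z - Real.pi * γ : ℝ) : ℂ) * Complex.I) := by
      rw [← Complex.exp_add]
      congr 1
      push_cast; ring
    rw [mPlusSing, cpowCut, harg, ← hA, ← e1]
    ring
  rw [key]
  simp only [Complex.mul_im, Complex.mul_re, Complex.ofReal_re,
    Complex.ofReal_im, Complex.exp_ofReal_mul_I_im, Complex.exp_ofReal_mul_I_re]
  ring

/-- Continuity in `l` of the integrand for fixed `ε > 0`. -/
lemma cont_integrand (C γ : ℝ) (hγ : 0 < γ) {ε : ℝ} (hε : 0 < ε) :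
    Continuous fun l : ℝ => (mPlusSing C γ ((l : ℂ) + ε * Complex.I)).im := by
  set A := -(C ^ 2) * (2 / Real.pi) * Real.sin (Real.pi * γ) with hA
  have him : ∀ l : ℝ, ((l : ℂ) + ε * Complex.I).im = ε := by intro l; simp
  have heq : (fun l : ℝ => (mPlusSing C γ ((l : ℂ) + ε * Complex.I)).im)
      = fun l : ℝ => A * ‖(l : ℂ) + ε * Complex.I‖ ^ γ *
          Real.sin (γ * Complex.arg ((l : ℂ) + ε * Complex.I) - Real.pi * γ) := by
    funext l
    exact im_mPlusSing C γ (by rw [him l]; exact hε)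
  rw [heq]
  rw [continuous_iff_continuousAt]
  intro l
  have hz : ContinuousAt (fun l : ℝ => ((l : ℂ) + ε * Complex.I)) l := by
    fun_prop
  have habs : ContinuousAt (fun l : ℝ => ‖(l : ℂ) + ε * Complex.I‖) l :=
    continuous_norm.continuousAt.comp hz
  have hrpow : ContinuousAt
      (fun l : ℝ => ‖(l : ℂ) + ε * Complex.I‖ ^ γ) l :=
    habs.rpow_const (Or.inr hγ.le)
  have harg : ContinuousAt (fun l : ℝ => Complex.arg ((l : ℂ) + ε * Complex.I)) l :=
    (Complex.continuousAt_arg (Complex.mem_slitPlane_iff.2 (Or.inr (by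
      rw [him l]; exact hε.ne')))).comp hz
  exact (continuousAt_const.mul hrpow).mul
    (Real.continuous_sin.continuousAt.comp ((continuousAt_const.mul harg).sub
      continuousAt_const))

/-- Pointwise limit of the integrand as `ε ↓ 0`, for `l > 0`. -/
lemma tendsto_integrand (C γ : ℝ) {l : ℝ} (hl : 0 < l) :
    Tendsto (fun ε : ℝ => (mPlusSing C γ ((l : ℂ) + ε * Complex.I)).im)
      (nhdsWithin 0 (Set.Ioi 0))
      (nhds ((-(C ^ 2) * (2 / Real.pi) * Real.sin (Real.pi * γ)) * l ^ γ *
        Real.sin (-(Real.pi * γ)))) := by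
  set A := -(C ^ 2) * (2 / Real.pi) * Real.sin (Real.pi * γ) with hA
  have hz : ContinuousAt (fun ε : ℝ => ((l : ℂ) + ε * Complex.I)) 0 := by fun_prop
  have hz0 : ((l : ℂ) + ((0 : ℝ) : ℂ) * Complex.I) = (l : ℂ) := by simp
  have habs : ContinuousAt (fun ε : ℝ => ‖(l : ℂ) + ε * Complex.I‖) 0 :=
    continuous_norm.continuousAt.comp hz
  have habs0 : ‖(l : ℂ) + ((0 : ℝ) : ℂ) * Complex.I‖ = l := by
    rw [hz0]; simp [abs_of_pos hl]
  have hrpow : ContinuousAt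
      (fun ε : ℝ => ‖(l : ℂ) + ε * Complex.I‖ ^ γ) 0 :=
    habs.rpow_const (Or.inl (by
      show ‖(l : ℂ) + ((0 : ℝ) : ℂ) * Complex.I‖ ≠ 0
      rw [habs0]; exact hl.ne'))
  have harg : ContinuousAt (fun ε : ℝ => Complex.arg ((l : ℂ) + ε * Complex.I)) 0 :=
    (Complex.continuousAt_arg (Complex.mem_slitPlane_iff.2 (Or.inl (by
      rw [hz0]; simpa using hl)))).comp hz
  have harg0 : Complex.arg ((l : ℂ) + ((0 : ℝ) : ℂ) * Complex.I) = 0 := by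
    rw [hz0]; exact Complex.arg_ofReal_of_nonneg hl.le
  have hcont : ContinuousAt (fun ε : ℝ =>
      A * ‖(l : ℂ) + ε * Complex.I‖ ^ γ *
        Real.sin (γ * Complex.arg ((l : ℂ) + ε * Complex.I) - Real.pi * γ)) 0 :=
    (continuousAt_const.mul hrpow).mul
      (Real.continuous_sin.continuousAt.comp ((continuousAt_const.mul harg).sub
        continuousAt_const))
  have hval : A * ‖(l : ℂ) + ((0 : ℝ) : ℂ) * Complex.I‖ ^ γ *
      Real.sin (γ * Complex.arg ((l : ℂ) + ((0 : ℝ) : ℂ) * Complex.I) - Real.pi * γ)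
      = A * l ^ γ * Real.sin (-(Real.pi * γ)) := by
    rw [habs0, harg0]; ring_nf
  have h2 : Tendsto (fun ε : ℝ =>
      A * ‖(l : ℂ) + ε * Complex.I‖ ^ γ *
        Real.sin (γ * Complex.arg ((l : ℂ) + ε * Complex.I) - Real.pi * γ))
      (nhdsWithin 0 (Set.Ioi 0)) (nhds (A * l ^ γ * Real.sin (-(Real.pi * γ)))) := by
    rw [← hval]
    exact hcont.continuousWithinAt
  refine h2.congr' ?_
  filter_upwards [self_mem_nhdsWithin] with ε hε
  exact (im_mPlusSing C γ (z := (l : ℂ) + ε * Complex.I) (by simpa using hε)).symm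

/-- The spectral function of `H₊(γ)`: the Stieltjes-type inversion of `m₊` gives
`ρ₊((λ₁,λ₂]) = C² (λ₂^{γ+1} - λ₁^{γ+1})/(γ+1) · (2/π²) sin²(πγ)`. -/
theorem mPlusSing_spectral_function (C γ : ℝ) (hγ : 1 ≤ γ) (hnat : ∀ n : ℕ, γ ≠ n)
    (hC : C ≠ 0) (lam1 lam2 : ℝ) (h1 : 0 ≤ lam1) (h12 : lam1 < lam2) :
    ∃ L : ℝ → ℝ,
      (∀ δ > 0, Tendsto (fun ε : ℝ =>
          (1 / Real.pi) *
            ∫ l in (lam1 + δ)..(lam2 + δ),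
              (mPlusSing C γ ((l : ℂ) + ε * Complex.I)).im)
        (nhdsWithin 0 (Set.Ioi 0)) (nhds (L δ))) ∧
      Tendsto L (nhdsWithin 0 (Set.Ioi 0))
        (nhds (C ^ 2 * ((lam2 ^ (γ + 1) - lam1 ^ (γ + 1)) / (γ + 1)) *
          (2 / Real.pi ^ 2) * Real.sin (Real.pi * γ) ^ 2)) := by
  have hγ0 : (0 : ℝ) < γ := lt_of_lt_of_le one_pos hγ
  set A := -(C ^ 2) * (2 / Real.pi) * Real.sin (Real.pi * γ) with hA
  set L : ℝ → ℝ := fun δ => (1 / Real.pi) * (A * Real.sin (-(Real.pi * γ)) *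
    (((lam2 + δ) ^ (γ + 1) - (lam1 + δ) ^ (γ + 1)) / (γ + 1))) with hL
  refine ⟨L, ?_, ?_⟩
  · intro δ hδ
    have ha : 0 < lam1 + δ := by linarith
    have hab : lam1 + δ ≤ lam2 + δ := by linarith
    have hDCT : Tendsto (fun ε : ℝ =>
        ∫ l in (lam1 + δ)..(lam2 + δ), (mPlusSing C γ ((l : ℂ) + ε * Complex.I)).im)
        (nhdsWithin 0 (Set.Ioi 0))
        (nhds (∫ l in (lam1 + δ)..(lam2 + δ),
          A * l ^ γ * Real.sin (-(Real.pi * γ)))) := by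
      apply intervalIntegral.tendsto_integral_filter_of_dominated_convergence
        (bound := fun l => |A| * (|l| + 1) ^ γ)
      · filter_upwards [self_mem_nhdsWithin] with ε hε
        exact (cont_integrand C γ hγ0 hε).aestronglyMeasurable
      · filter_upwards [Ioo_mem_nhdsGT_of_mem (by simp : (0:ℝ) ∈ Set.Ico (0:ℝ) 1)]
          with ε hε
        apply MeasureTheory.ae_of_all
        intro l _
        have hεim : ((l : ℂ) + ε * Complex.I).im = ε := by simp
        rw [Real.norm_eq_abs, im_mPlusSing C γ (by rw [hεim]; exact hε.1)]
        have habs : ‖(l : ℂ) + ε * Complex.I‖ ≤ |l| + 1 := by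
          calc ‖(l : ℂ) + ε * Complex.I‖
              ≤ ‖(l : ℂ)‖ + ‖(ε : ℂ) * Complex.I‖ :=
                norm_add_le _ _
            _ = |l| + |ε| := by simp
            _ ≤ |l| + 1 := by
                rw [abs_of_nonneg hε.1.le]; linarith [hε.2]
        have hrp : ‖(l : ℂ) + ε * Complex.I‖ ^ γ ≤ (|l| + 1) ^ γ :=
          Real.rpow_le_rpow (norm_nonneg _) habs hγ0.le
        have hrp0 : (0:ℝ) ≤ ‖(l : ℂ) + ε * Complex.I‖ ^ γ :=
          Real.rpow_nonneg (norm_nonneg _) _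
        calc |A * ‖(l : ℂ) + ε * Complex.I‖ ^ γ *
              Real.sin (γ * Complex.arg ((l : ℂ) + ε * Complex.I) - Real.pi * γ)|
            = |A| * ‖(l : ℂ) + ε * Complex.I‖ ^ γ *
              |Real.sin (γ * Complex.arg ((l : ℂ) + ε * Complex.I) - Real.pi * γ)| := by
              rw [abs_mul, abs_mul, abs_of_nonneg hrp0]
          _ ≤ |A| * ‖(l : ℂ) + ε * Complex.I‖ ^ γ * 1 :=
              mul_le_mul_of_nonneg_left (Real.abs_sin_le_one _) (by positivity)
          _ ≤ |A| * (|l| + 1) ^ γ := by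
              rw [mul_one]
              exact mul_le_mul_of_nonneg_left hrp (abs_nonneg _)
      · apply Continuous.intervalIntegrable
        exact continuous_const.mul ((continuous_abs.add continuous_const).rpow_const
          (fun x => Or.inr hγ0.le))
      · apply MeasureTheory.ae_of_all
        intro l hl
        rw [Set.uIoc_of_le hab] at hl
        exact tendsto_integrand C γ (lt_trans ha hl.1)
    have hint : (∫ l in (lam1 + δ)..(lam2 + δ), A * l ^ γ * Real.sin (-(Real.pi * γ)))
        = A * Real.sin (-(Real.pi * γ)) *
          (((lam2 + δ) ^ (γ + 1) - (lam1 + δ) ^ (γ + 1)) / (γ + 1)) := by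
      have heq : (fun l : ℝ => A * l ^ γ * Real.sin (-(Real.pi * γ)))
          = fun l : ℝ => (A * Real.sin (-(Real.pi * γ))) * l ^ γ := by
        funext l; ring
      rw [heq, intervalIntegral.integral_const_mul,
        integral_rpow (Or.inl (by linarith : (-1 : ℝ) < γ))]
    rw [hint] at hDCT
    exact hDCT.const_mul (1 / Real.pi)
  · have hcont : ContinuousAt L 0 := by
      have h1c : ContinuousAt (fun δ : ℝ => (lam1 + δ) ^ (γ + 1)) 0 :=
        (continuousAt_const.add continuousAt_id).rpow_const (Or.inr (by linarith))
      have h2c : ContinuousAt (fun δ : ℝ => (lam2 + δ) ^ (γ + 1)) 0 :=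
        (continuousAt_const.add continuousAt_id).rpow_const (Or.inr (by linarith))
      exact continuousAt_const.mul (continuousAt_const.mul
        ((h2c.sub h1c).div_const _))
    have hval : L 0 = C ^ 2 * ((lam2 ^ (γ + 1) - lam1 ^ (γ + 1)) / (γ + 1)) *
        (2 / Real.pi ^ 2) * Real.sin (Real.pi * γ) ^ 2 := by
      simp only [hL, hA, add_zero]
      rw [Real.sin_neg]
      have hπ : Real.pi ≠ 0 := Real.pi_ne_zero
      field_simp
    exact hval ▸ hcont.continuousWithinAt (s := Set.Ioi (0:ℝ))
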